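/- Let N ≥ 1 and m ≥ 1 be integers, let w be a ℤ-linear automorphism of ℤᴺ with wᵐ = id, let q ≥ 2 be an integer, and let f₁, …, f_d : ℤᴺ → ℤ be ℤ-linear maps. Set X₊ = {μ ∈ ℤᴺ : f_k(μ) ≥ 0 for all k} and define h : ℤᴺ → ℤᴺ by h(λ) = λ − q·w(λ). Then for every λ ∈ ℤᴺ the following are equivalent: (a) there exist an integer c ≥ 1 and μ ∈ X₊ with c·λ = h(μ); (b) ∑_{i=0}^{m−1} qⁱ · f_k( wⁱ(λ) ) ≤ 0 for every k = 1, …, d. -/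

import Mathlib

/-- Equation (4.13) of the paper, abstracted: the saturation of the image of the
dominant cone `X₊ = {μ : fₖ(μ) ≥ 0 ∀k}` under `h(λ) = λ − q·w(λ)` (where `w` is a
finite-order linear automorphism of `ℤᴺ` with `wᵐ = id`) is cut out by the
inequalities `∑_{i<m} qⁱ·fₖ(wⁱλ) ≤ 0`. -/
theorem stmt9 (N : ℕ) (hN : 1 ≤ N) (m : ℕ) (hm : 1 ≤ m)
    (w : Module.End ℤ (Fin N → ℤ)) (hw : w ^ m = 1)
    (q : ℤ) (hq : 2 ≤ q)
    (d : ℕ) (f : Fin d → ((Fin N → ℤ) →ₗ[ℤ] ℤ))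
    (lam : Fin N → ℤ) :
    (∃ c : ℕ, 1 ≤ c ∧ ∃ μ : Fin N → ℤ, (∀ k, 0 ≤ f k μ) ∧
        (c : ℤ) • lam = μ - q • w μ) ↔
    (∀ k, ∑ i ∈ Finset.range m, q ^ i * f k ((w ^ i) lam) ≤ 0) := by
  have hqm : (1 : ℤ) ≤ q ^ m := one_le_pow₀ (by linarith)
  constructor
  · rintro ⟨c, hc, μ, hμ, hcl⟩ k
    set S := ∑ i ∈ Finset.range m, q ^ i * f k ((w ^ i) lam) with hS
    have key : (c : ℤ) * S = (1 - q ^ m) * f k μ := by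
      have h1 : (c : ℤ) * S = ∑ i ∈ Finset.range m,
          (q ^ i * f k ((w ^ i) μ) - q ^ (i + 1) * f k ((w ^ (i + 1)) μ)) := by
        rw [hS, Finset.mul_sum]
        refine Finset.sum_congr rfl fun i _ => ?_
        have h2 : (w ^ i) ((c : ℤ) • lam) = (w ^ i) μ - q • (w ^ (i + 1)) μ := by
          rw [hcl, map_sub, map_smul, pow_succ]
          rfl
        have h3 : (c : ℤ) * f k ((w ^ i) lam) = f k ((w ^ i) ((c : ℤ) • lam)) := by
          rw [map_smul, map_smul, smul_eq_mul]
        rw [show (c : ℤ) * (q ^ i * f k ((w ^ i) lam))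
            = q ^ i * ((c : ℤ) * f k ((w ^ i) lam)) by ring, h3, h2, map_sub, map_smul,
          smul_eq_mul]
        ring
      rw [h1, Finset.sum_range_sub' (fun i => q ^ i * f k ((w ^ i) μ))]
      simp [hw, Module.End.one_apply]
      ring
    have hfk := hμ k
    have hcS : (c : ℤ) * S ≤ 0 := by
      rw [key]; nlinarith
    have hc' : (1 : ℤ) ≤ (c : ℤ) := by exact_mod_cast hc
    nlinarith
  · intro h
    refine ⟨(q ^ m - 1).toNat, ?_, -∑ i ∈ Finset.range m, q ^ i • (w ^ i) lam, ?_, ?_⟩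
    · have : (1 : ℤ) ≤ q ^ m - 1 := by
        have : (2 : ℤ) ≤ q ^ m := by
          calc (2:ℤ) = 2 ^ 1 := by ring
          _ ≤ 2 ^ m := pow_le_pow_right₀ (by norm_num) hm
          _ ≤ q ^ m := pow_le_pow_left₀ (by norm_num) hq m
        linarith
      omega
    · intro k
      have : f k (-∑ i ∈ Finset.range m, q ^ i • (w ^ i) lam)
          = -∑ i ∈ Finset.range m, q ^ i * f k ((w ^ i) lam) := by
        rw [map_neg, map_sum]
        congr 1
        exact Finset.sum_congr rfl fun i _ => by rw [map_smul, smul_eq_mul]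
      rw [this]
      linarith [h k]
    · have hcast : (((q ^ m - 1).toNat : ℤ)) = q ^ m - 1 :=
        Int.toNat_of_nonneg (by linarith)
      rw [hcast]
      have hwmu : q • w (-∑ i ∈ Finset.range m, q ^ i • (w ^ i) lam)
          = -∑ i ∈ Finset.range m, q ^ (i + 1) • (w ^ (i + 1)) lam := by
        rw [map_neg, map_sum, smul_neg, Finset.smul_sum]
        congr 1
        refine Finset.sum_congr rfl fun i _ => ?_
        rw [map_smul, smul_smul, pow_succ']
        rw [pow_succ' w i]
        rfl
      rw [hwmu]
      have : (-∑ i ∈ Finset.range m, q ^ i • (w ^ i) lam)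
          - (-∑ i ∈ Finset.range m, q ^ (i + 1) • (w ^ (i + 1)) lam)
          = ∑ i ∈ Finset.range m,
            (q ^ (i + 1) • (w ^ (i + 1)) lam - q ^ i • (w ^ i) lam) := by
        rw [neg_sub_neg, ← Finset.sum_sub_distrib]
      rw [this, Finset.sum_range_sub (fun i => q ^ i • (w ^ i) lam)]
      simp [hw, Module.End.one_apply, sub_smul]
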